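/- Let V and M be connected, locally path-connected topological spaces, let ι : V → M be a topological embedding, and let v₀ ∈ V be such that ι_* : π₁(V, v₀) → π₁(M, ι(v₀)) is injective. Let p : Ṽ → V and P : M̃ → M be covering maps with Ṽ and M̃ path-connected, let x̃ ∈ p⁻¹(v₀) and ã ∈ P⁻¹(ι(v₀)), and suppose P_*(π₁(M̃, ã)) = (ι ∘ p)_*(π₁(Ṽ, x̃)) as subgroups of π₁(M, ι(v₀)). Let ψ̄ : Ṽ → M̃ be a continuous map with P ∘ ψ̄ = ι ∘ p and ψ̄(x̃) = ã. Then ψ̄ is a topological embedding: ψ̄ is injective and is a homeomorphism onto its image. -/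

import Mathlib

open CategoryTheory

universe u

/-- The homomorphism on fundamental groups induced by a continuous map. -/
noncomputable def piMap {X Y : Type u} [TopologicalSpace X] [TopologicalSpace Y]
    (f : C(X, Y)) (x : X) :
    FundamentalGroup X x →* FundamentalGroup Y (f x) :=
  CategoryTheory.Functor.mapEnd (X := FundamentalGroupoid.mk x)
    (FundamentalGroupoid.fundamentalGroupoidFunctor.map (X := TopCat.of X) (Y := TopCat.of Y) (TopCat.ofHom f))

/-- Transport of fundamental groups along an equality of basepoints. -/
noncomputable def pi1Cast {X : Type u} [TopologicalSpace X] {a b : X} (h : a = b) :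
    FundamentalGroup X a ≃* FundamentalGroup X b := by
  subst h; exact MulEquiv.refl _

section LiftingAux

open Set Metric Topology

variable {E X : Type u} [TopologicalSpace E] [TopologicalSpace X] {p : E → X}

theorem my_fiber_nonempty (hp : IsCoveringMap p) [ConnectedSpace X] [Nonempty E] (x : X) :
    Nonempty (p ⁻¹' {x}) := by
  have hcl : IsClopen (Set.range p) := by
    refine ⟨?_, hp.isOpenMap.isOpen_range⟩
    rw [← isOpen_compl_iff, isOpen_iff_forall_mem_open]
    intro y hy
    obtain ⟨_, U, hyU, hU, _, H, hH⟩ := hp y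
    refine ⟨U, fun z hz ⟨e, he⟩ => ?_, hU, hyU⟩
    have hmem : e ∈ p ⁻¹' U := by
      show p e ∈ U
      rw [he]; exact hz
    obtain ⟨f, hf⟩ := (H ⟨e, hmem⟩).2
    exact hy ⟨f, hf⟩
  obtain ⟨e⟩ := ‹Nonempty E›
  have hu := hcl.eq_univ ⟨p e, e, rfl⟩
  obtain ⟨e', he'⟩ : x ∈ Set.range p := hu ▸ Set.mem_univ x
  exact ⟨⟨e', he'⟩⟩

theorem my_exists_lift [∀ x : X, Nonempty (p ⁻¹' {x})] (hp : IsCoveringMap p) (γ : ℝ → X) (hγ : Continuous γ)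
    (e : E) (he : p e = γ 0) :
    ∃ L : ℝ → E, Continuous L ∧ L 0 = e ∧ ∀ t, p (L t) = γ (max 0 (min t 1)) := by
  have hopen : ∀ x : X, IsOpen (γ ⁻¹' ((hp x).toTrivialization.baseSet)) := fun x =>
    (hp x).toTrivialization.open_baseSet.preimage hγ
  have hcov : Icc (0:ℝ) 1 ⊆ ⋃ x : X, γ ⁻¹' ((hp x).toTrivialization.baseSet) := fun t _ =>
    mem_iUnion.mpr ⟨γ t, (hp (γ t)).mem_toTrivialization_baseSet⟩
  obtain ⟨δ, hδ, hlb⟩ := lebesgue_number_lemma_of_metric isCompact_Icc hopen hcov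
  obtain ⟨n, hn⟩ := exists_nat_one_div_lt hδ
  set N : ℕ := n + 1 with hN
  have hNpos : (0:ℝ) < N := by positivity
  have h1N : 1 / (N:ℝ) < δ := by exact_mod_cast hn
  have key : ∀ k : ℕ, k ≤ N → ∃ L : ℝ → E, Continuous L ∧ L 0 = e ∧
      ∀ t, p (L t) = γ (max 0 (min t ((k:ℝ)/N))) := by
    intro k
    induction k with
    | zero =>
      intro _
      refine ⟨fun _ => e, continuous_const, rfl, fun t => ?_⟩
      have h0 : ((0:ℕ):ℝ)/N = 0 := by simp
      rw [h0, max_eq_left (min_le_right t 0), he]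
    | succ k ih =>
      intro hk1
      obtain ⟨L, hLc, hL0, hLp⟩ := ih (Nat.le_of_succ_le hk1)
      set c : ℝ := (k:ℝ)/N with hc
      set c' : ℝ := ((k+1:ℕ):ℝ)/N with hc'
      have hdiff : c' - c = 1/N := by rw [hc', hc]; push_cast; ring
      have hc0 : 0 ≤ c := by positivity
      have hcc' : c ≤ c' := by
        rw [hc, hc', div_le_div_iff_of_pos_right hNpos]
        push_cast; linarith
      have hc'1 : c' ≤ 1 := by
        rw [hc', div_le_one hNpos]
        exact_mod_cast hk1
      have hc1 : c ≤ 1 := le_trans hcc' hc'1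
      obtain ⟨x, hx⟩ := hlb c ⟨hc0, hc1⟩
      set T := (hp x).toTrivialization with hT
      have hsub : ∀ u, u ∈ Icc c c' → γ u ∈ T.baseSet := by
        intro u hu
        refine hx ?_
        rw [mem_ball, Real.dist_eq, abs_lt]
        constructor <;> [linarith [hu.1]; linarith [hu.2]]
      have hpLc : p (L c) = γ c := by
        rw [hLp c, min_self, max_eq_right hc0]
      have hLcmem : L c ∈ T.source := by
        rw [T.mem_source, hpLc]
        exact hsub c ⟨le_refl _, hcc'⟩
      set f₀ := (T (L c)).2 with hf₀
      set Lb : ℝ → E := fun t => T.toOpenPartialHomeomorph.symm (γ (max c (min t c')), f₀) with hLb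
      have hmemb : ∀ t : ℝ, (γ (max c (min t c')), f₀) ∈ T.target := by
        intro t
        rw [T.mem_target]
        exact hsub _ ⟨le_max_left _ _, max_le hcc' (min_le_right _ _)⟩
      have hLbc : Continuous Lb := by
        refine T.toOpenPartialHomeomorph.continuousOn_symm.comp_continuous ?_ hmemb
        exact (hγ.comp (continuous_const.max
          (continuous_id.min continuous_const))).prodMk continuous_const
      have hbdry : ∀ t : ℝ, t = c → L t = Lb t := by
        intro t ht
        subst ht
        rw [hLb]
        simp only [min_eq_left hcc', max_self]
        rw [← hpLc]
        exact (T.symm_apply_mk_proj hLcmem).symm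
      refine ⟨fun t => if t ≤ c then L t else Lb t, ?_, ?_, ?_⟩
      · exact hLc.if_le hLbc continuous_id continuous_const hbdry
      · show (if (0:ℝ) ≤ c then L 0 else Lb 0) = e
        rw [if_pos hc0, hL0]
      · intro t
        show p (if t ≤ c then L t else Lb t) = γ (max 0 (min t c'))
        by_cases ht : t ≤ c
        · rw [if_pos ht, hLp t, min_eq_left ht, min_eq_left (le_trans ht hcc')]
        · push_neg at ht
          rw [if_neg (not_le.mpr ht)]
          have h1 : max c (min t c') = min t c' := max_eq_right (le_min ht.le hcc')
          have h2 : max 0 (min t c') = min t c' := max_eq_right (le_min (hc0.trans ht.le) (hc0.trans hcc'))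
          rw [hLb]
          simp only
          rw [T.proj_symm_apply' (hsub _ ⟨le_max_left _ _, max_le hcc' (min_le_right _ _)⟩), h1, h2]
  obtain ⟨L, h1, h2, h3⟩ := key N (le_refl N)
  refine ⟨L, h1, h2, fun t => ?_⟩
  rw [h3 t, div_self hNpos.ne']

variable {E X : Type u} [TopologicalSpace E] [TopologicalSpace X] {p : E → X}

theorem clamp_projIcc (t : ℝ) :
    projIcc (0:ℝ) 1 zero_le_one (max 0 (min t 1)) = projIcc 0 1 zero_le_one t := by
  rcases le_total t 0 with h | h
  · rw [min_eq_left (h.trans zero_le_one), max_eq_left h, projIcc_left, projIcc_of_le_left _ h]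
  · rcases le_total t 1 with h' | h'
    · rw [min_eq_left h', max_eq_right h]
    · rw [min_eq_right h', max_eq_right zero_le_one, projIcc_right, projIcc_of_right_le _ h']

theorem my_heq_end [∀ x : X, Nonempty (p ⁻¹' {x})] (hp : IsCoveringMap p) {v₀ v₁ : X} {a b : Path v₀ v₁}
    (hab : Path.Homotopic a b) {A B : ℝ → E} (hA : Continuous A) (hB : Continuous B)
    (hpa : ∀ t, p (A t) = a.extend t) (hpb : ∀ t, p (B t) = b.extend t)
    (h0 : A 0 = B 0) : A 1 = B 1 := by
  obtain ⟨H⟩ := hab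
  set pr : ℝ → unitInterval := projIcc (0:ℝ) 1 zero_le_one with hprdef
  have hprc : Continuous pr := continuous_projIcc
  have hprclamp : ∀ t : ℝ, pr (max 0 (min t 1)) = pr t := clamp_projIcc
  set G : ℝ → ℝ → X := fun s t => H (pr s, pr t) with hG
  have hGc : Continuous (fun q : ℝ × ℝ => G q.1 q.2) :=
    H.continuous.comp ((hprc.comp continuous_fst).prodMk (hprc.comp continuous_snd))
  have hGs : ∀ s, Continuous (G s) := fun s =>
    hGc.comp (continuous_const.prodMk continuous_id)
  have hG0 : ∀ s, G s 0 = v₀ := fun s => by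
    show H (pr s, pr 0) = v₀
    rw [hprdef]
    rw [projIcc_left]
    exact (H.eq_fst _ (Set.mem_insert _ _)).trans a.source
  have hG1 : ∀ s, G s 1 = v₁ := fun s => by
    show H (pr s, pr 1) = v₁
    rw [hprdef]
    rw [projIcc_right]
    exact (H.eq_fst _ (Set.mem_insert_of_mem _ rfl)).trans a.target
  have hpA0 : ∀ s : ℝ, p (A 0) = G s 0 := fun s => by
    rw [hpa 0, Path.extend_zero, hG0 s]
  choose L hLc hL0 hLp using fun s : ℝ => my_exists_lift hp (G s) (hGs s) (A 0) (hpA0 s)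
  have hLp' : ∀ s t, p (L s t) = G s t := fun s t => by
    rw [hLp s t]
    show H (pr s, pr (max 0 (min t 1))) = H (pr s, pr t)
    rw [hprclamp]
  have hGA : ∀ t, G 0 t = a.extend t := fun t => by
    show H (pr 0, pr t) = a.extend t
    rw [hprdef, projIcc_left]
    exact H.apply_zero (pr t)
  have hGB : ∀ t, G 1 t = b.extend t := fun t => by
    show H (pr 1, pr t) = b.extend t
    rw [hprdef, projIcc_right]
    exact H.apply_one (pr t)
  -- local constancy of the endpoint
  have hloc : ∀ s₀ : ℝ, ∃ δ > 0, ∀ s, dist s s₀ < δ → L s 1 = L s₀ 1 := by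
    intro s₀
    have hK : IsCompact (Icc (0:ℝ) 1 ×ˢ Icc (0:ℝ) 1) := isCompact_Icc.prod isCompact_Icc
    have hopen : ∀ x : X, IsOpen ((fun q : ℝ × ℝ => G q.1 q.2) ⁻¹' ((hp x).toTrivialization.baseSet)) :=
      fun x => (hp x).toTrivialization.open_baseSet.preimage hGc
    have hcov : Icc (0:ℝ) 1 ×ˢ Icc (0:ℝ) 1 ⊆
        ⋃ x : X, (fun q : ℝ × ℝ => G q.1 q.2) ⁻¹' ((hp x).toTrivialization.baseSet) := fun q _ =>
      Set.mem_iUnion.mpr ⟨G q.1 q.2, (hp _).mem_toTrivialization_baseSet⟩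
    obtain ⟨δ, hδ, hlb⟩ := lebesgue_number_lemma_of_metric hK hopen hcov
    obtain ⟨n0, hn0⟩ := exists_nat_one_div_lt hδ
    set N : ℕ := n0 + 1 with hN
    have hNpos : (0:ℝ) < N := by positivity
    have h1N : 1 / (N:ℝ) < δ := by exact_mod_cast hn0
    set τ : ℝ := max 0 (min s₀ 1) with hτ
    have hτmem : τ ∈ Icc (0:ℝ) 1 :=
      ⟨le_max_left _ _, max_le zero_le_one (min_le_right _ _)⟩
    have hkN : ∀ k : ℕ, k < N → (k:ℝ)/N ∈ Icc (0:ℝ) 1 := fun k hk =>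
      ⟨by positivity, by rw [div_le_one hNpos]; exact_mod_cast hk.le⟩
    have hTs : ∀ k : ℕ, k < N → ∃ x : X, ball (τ, (k:ℝ)/N) δ ⊆
        (fun q : ℝ × ℝ => G q.1 q.2) ⁻¹' ((hp x).toTrivialization.baseSet) := fun k hk =>
      hlb _ (Set.mk_mem_prod hτmem (hkN k hk))
    choose xs hxs using hTs
    -- tube property
    have tube : ∀ s, dist s s₀ < δ → ∀ k (hk : k < N), ∀ t, t ∈ Icc ((k:ℝ)/N) (((k:ℝ)+1)/N) →
        G s t ∈ ((hp (xs k hk)).toTrivialization).baseSet := by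
      intro s hs k hk t ht
      have h1 : G s t = G (max 0 (min s 1)) t := by
        show H (pr s, pr t) = H (pr (max 0 (min s 1)), pr t)
        rw [hprclamp]
      rw [h1]
      have hco : ∀ u : ℝ, ((pr u : ℝ)) = max 0 (min u 1) := fun u => by
        rw [hprdef]; simp [projIcc, min_comm]
      have hd1 : dist (max 0 (min s 1)) τ < δ := by
        rw [hτ, ← hco s, ← hco s₀, ← Subtype.dist_eq]
        have h2 := (LipschitzWith.projIcc (a := (0:ℝ)) (b := 1) zero_le_one).dist_le_mul s s₀
        simp only [NNReal.coe_one, one_mul] at h2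
        exact lt_of_le_of_lt h2 hs
      have hd2 : dist t ((k:ℝ)/N) < δ := by
        rw [Real.dist_eq, abs_lt]
        have hdd : ((k:ℝ)+1)/N - (k:ℝ)/N = 1/N := by ring
        constructor <;> [linarith [ht.1]; linarith [ht.2]]
      have hball : ((max 0 (min s 1)), t) ∈ ball (τ, (k:ℝ)/N) δ := by
        rw [mem_ball, Prod.dist_eq]
        exact max_lt hd1 hd2
      exact hxs k hk hball
    have hmemsrc : ∀ s, dist s s₀ < δ → ∀ k (hk : k < N), ∀ t, t ∈ Icc ((k:ℝ)/N) (((k:ℝ)+1)/N) →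
        L s t ∈ ((hp (xs k hk)).toTrivialization).source := by
      intro s hs k hk t ht
      rw [Bundle.Trivialization.mem_source, hLp']
      exact tube s hs k hk t ht
    -- constancy of the fiber coordinate along each piece
    have piece : ∀ s, dist s s₀ < δ → ∀ k (hk : k < N),
        (((hp (xs k hk)).toTrivialization) (L s (((k:ℝ)+1)/N))).2
          = (((hp (xs k hk)).toTrivialization) (L s ((k:ℝ)/N))).2 := by
      intro s hs k hk
      set T := (hp (xs k hk)).toTrivialization with hT
      have hd : DiscreteTopology (p ⁻¹' {xs k hk}) := (hp (xs k hk)).1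
      have hcont : ContinuousOn (fun t => (T (L s t)).2) (Icc ((k:ℝ)/N) (((k:ℝ)+1)/N)) := by
        refine continuous_snd.comp_continuousOn ?_
        refine T.toOpenPartialHomeomorph.continuousOn.comp (hLc s).continuousOn ?_
        intro t ht
        exact hmemsrc s hs k hk t ht
      have hpre : IsPreconnected ((fun t => (T (L s t)).2) '' Icc ((k:ℝ)/N) (((k:ℝ)+1)/N)) :=
        (isPreconnected_Icc).image _ hcont
      have hsub : ((fun t => (T (L s t)).2) '' Icc ((k:ℝ)/N) (((k:ℝ)+1)/N)).Subsingleton :=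
        hpre.subsingleton
      have hkk : (k:ℝ)/N ≤ ((k:ℝ)+1)/N := by
        rw [div_le_div_iff_of_pos_right hNpos]; linarith
      exact hsub (Set.mem_image_of_mem _ ⟨hkk, le_refl _⟩)
        (Set.mem_image_of_mem _ ⟨le_refl _, hkk⟩)
    have hkk' : ∀ k : ℕ, (k:ℝ)/N ≤ ((k:ℝ)+1)/N := fun k => by
      rw [div_le_div_iff_of_pos_right hNpos]; linarith
    have main : ∀ k : ℕ, ∀ (hk : k < N), ∃ w, ∀ s, dist s s₀ < δ →
        (((hp (xs k hk)).toTrivialization) (L s ((k:ℝ)/N))).2 = w := by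
      intro k
      induction k with
      | zero =>
        intro hk
        refine ⟨(((hp (xs 0 hk)).toTrivialization) (A 0)).2, fun s hs => ?_⟩
        have hz : ((0:ℕ):ℝ)/N = 0 := by simp
        rw [hz, hL0 s]
      | succ k ih =>
        intro hk1
        have hk : k < N := Nat.lt_of_succ_lt hk1
        obtain ⟨w, hw⟩ := ih hk
        set T := (hp (xs k hk)).toTrivialization with hTdef
        set T' := (hp (xs (k+1) hk1)).toTrivialization with hT'def
        have hcast : ((k+1:ℕ):ℝ)/N = ((k:ℝ)+1)/N := by push_cast; ring
        have hcast2 : (((k+1:ℕ):ℝ)+1)/N = ((k:ℝ)+2)/N := by push_cast; ring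
        have hmem1 : ∀ s, dist s s₀ < δ → L s (((k:ℝ)+1)/N) ∈ T.source := fun s hs =>
          hmemsrc s hs k hk _ ⟨hkk' k, le_refl _⟩
        have hval : ∀ s, dist s s₀ < δ → L s (((k:ℝ)+1)/N)
            = T.toOpenPartialHomeomorph.symm (G s (((k:ℝ)+1)/N), w) := by
          intro s hs
          have h2 : (T (L s (((k:ℝ)+1)/N))).2 = w := by rw [piece s hs k hk, hw s hs]
          have h3 := T.symm_apply_mk_proj (hmem1 s hs)
          rw [← h3, hLp', h2]
        have hmem2 : ∀ s, dist s s₀ < δ → L s (((k:ℝ)+1)/N) ∈ T'.source := by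
          intro s hs
          refine hmemsrc s hs (k+1) hk1 (((k:ℝ)+1)/N) ⟨le_of_eq hcast, ?_⟩
          rw [hcast2, div_le_div_iff_of_pos_right hNpos]; linarith
        set g : ℝ → (p ⁻¹' {xs (k+1) hk1}) :=
          fun s => (T' (T.toOpenPartialHomeomorph.symm (G s (((k:ℝ)+1)/N), w))).2 with hgdef
        have hgcont : ContinuousOn g (ball s₀ δ) := by
          refine continuous_snd.comp_continuousOn ?_
          refine T'.toOpenPartialHomeomorph.continuousOn.comp ?_ ?_
          · refine T.toOpenPartialHomeomorph.continuousOn_symm.comp ?_ ?_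
            · exact ((hGc.comp (continuous_id.prodMk continuous_const)).prodMk
                continuous_const).continuousOn
            · intro s hs
              exact T.mem_target.mpr (tube s (mem_ball.mp hs) k hk _ ⟨hkk' k, le_refl _⟩)
          · intro s hs
            have := hmem2 s (mem_ball.mp hs)
            rwa [hval s (mem_ball.mp hs)] at this
        have hgconst : ∀ s ∈ ball s₀ δ, g s = g s₀ := by
          have hdt : DiscreteTopology (p ⁻¹' {xs (k+1) hk1}) := (hp _).1
          have hpre := ((convex_ball s₀ δ).isPreconnected).image g hgcont
          exact fun s hs => hpre.subsingleton (Set.mem_image_of_mem _ hs)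
            (Set.mem_image_of_mem _ (mem_ball_self hδ))
        refine ⟨g s₀, fun s hs => ?_⟩
        rw [hcast, hval s hs]
        exact hgconst s (mem_ball.mpr hs)
    have hlast : n0 < N := Nat.lt_succ_self n0
    obtain ⟨w, hw⟩ := main n0 hlast
    have hone : ((n0:ℝ)+1)/N = 1 := by
      rw [hN]; push_cast; rw [div_self]; positivity
    set T := (hp (xs n0 hlast)).toTrivialization with hTdef
    have hfin : ∀ s, dist s s₀ < δ → L s 1 = T.toOpenPartialHomeomorph.symm (v₁, w) := by
      intro s hs
      have hmem : L s 1 ∈ T.source := by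
        rw [← hone]
        exact hmemsrc s hs n0 hlast _ ⟨hkk' n0, le_refl _⟩
      have h2 : (T (L s 1)).2 = w := by
        rw [← hone, piece s hs n0 hlast, hw s hs]
      have h3 := T.symm_apply_mk_proj hmem
      rw [← h3, hLp', hG1, h2]
    refine ⟨δ, hδ, fun s hs => ?_⟩
    rw [hfin s hs, hfin s₀ (by simpa using hδ)]
  -- global constancy and identification of the two lifts
  have hlc : IsLocallyConstant (fun s => L s 1) := by
    rw [IsLocallyConstant.iff_eventually_eq]
    intro s₀
    obtain ⟨δ, hδ, hd⟩ := hloc s₀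
    exact Metric.eventually_nhds_iff.mpr ⟨δ, hδ, fun {y} hy => hd y hy⟩
  have hconst := hlc.apply_eq_of_preconnectedSpace 0 1
  have hA0 : A = L 0 := by
    refine hp.eq_of_comp_eq hA (hLc 0) (funext fun t => ?_) 0 (hL0 0).symm
    show p (A t) = p (L 0 t)
    rw [hpa t, hLp' 0 t, hGA t]
  have hB1 : B = L 1 := by
    refine hp.eq_of_comp_eq hB (hLc 1) (funext fun t => ?_) 0 (h0.symm.trans (hL0 1).symm)
    show p (B t) = p (L 1 t)
    rw [hpb t, hLp' 1 t, hGB t]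
  rw [hA0, hB1]
  exact hconst



attribute [local instance] Path.Homotopic.setoid

/-- The element of the fundamental group defined by a loop. -/
noncomputable def fgMk {Y : Type u} [TopologicalSpace Y] {y : Y} (l : Path y y) : FundamentalGroup Y y :=
  (⟦l⟧ : Path.Homotopic.Quotient y y)

lemma fgMk_hom {Y : Type u} [TopologicalSpace Y] {y : Y} (l : Path y y) :
    (fgMk l : Path.Homotopic.Quotient y y) = (⟦l⟧ : Path.Homotopic.Quotient y y) := rfl

lemma piMap_hom {X Y : Type u} [TopologicalSpace X] [TopologicalSpace Y]
    (f : C(X, Y)) (x : X) (g : FundamentalGroup X x) :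
    (piMap f x g : Path.Homotopic.Quotient (f x) (f x)) = Path.Homotopic.Quotient.map g f := rfl

lemma piMap_fgMk {X Y : Type u} [TopologicalSpace X] [TopologicalSpace Y]
    (f : C(X, Y)) (x : X) (l : Path x x) :
    piMap f x (fgMk l) = fgMk (l.map f.continuous) := by
  rw [piMap_hom, fgMk_hom, fgMk_hom]
  exact (Path.Homotopic.Quotient.mk_map l f).symm

lemma pi1Cast_fgMk {Y : Type u} [TopologicalSpace Y] {a b : Y} (h : a = b)
    (l : Path a a) (l' : Path b b) (hl : ∀ t, l t = l' t) :
    pi1Cast h (fgMk l) = fgMk l' := by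
  subst h
  have hll : l = l' := by ext t; exact hl t
  subst hll
  rfl


/-- Footnote of Section 3.2: the lift `ψ̄ : Ṽ → M̃` of `ι ∘ p` to the covering `P`,
chosen so that `P_*π₁(M̃, ã) = (ι ∘ p)_*π₁(Ṽ, x̃)`, is a topological embedding. -/
theorem lift_isEmbedding
    {V M Vt Mt : Type u} [TopologicalSpace V] [TopologicalSpace M]
    [TopologicalSpace Vt] [TopologicalSpace Mt]
    [ConnectedSpace V] [LocallyPathConnectedSpace V]
    [ConnectedSpace M] [LocallyPathConnectedSpace M]
    (iota : V → M) (hiota_cont : Continuous iota) (hiota : Topology.IsEmbedding iota)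
    (p : Vt → V) (hp : IsCoveringMap p) [PathConnectedSpace Vt]
    (P : Mt → M) (hP : IsCoveringMap P) [PathConnectedSpace Mt]
    (xt : Vt)
    (hinj : Function.Injective (piMap ⟨iota, hiota_cont⟩ (p xt)))
    (at_ : Mt) (hat : P at_ = iota (p xt))
    (hrange : Subgroup.map (pi1Cast hat).toMonoidHom (piMap ⟨P, hP.continuous⟩ at_).range
      = (piMap ((⟨iota, hiota_cont⟩ : C(V, M)).comp ⟨p, hp.continuous⟩) xt).range)
    (psib : Vt → Mt) (hpsib_cont : Continuous psib)
    (hcomm : ∀ y : Vt, P (psib y) = iota (p y))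
    (hbase : psib xt = at_) :
    Function.Injective psib ∧ Topology.IsEmbedding psib := by
  have hne : ∀ v : V, Nonempty (p ⁻¹' {v}) := my_fiber_nonempty hp
  have hinj_psib : Function.Injective psib := by
    intro y₁ y₂ hψeq
    have hpy : p y₁ = p y₂ := hiota.injective (by rw [← hcomm, ← hcomm, hψeq])
    set δp : Path xt y₁ := PathConnectedSpace.somePath xt y₁ with hδp
    set γp : Path y₁ y₂ := PathConnectedSpace.somePath y₁ y₂ with hγp
    set ds : Path (p y₁) (p xt) := (δp.map hp.continuous).symm with hds
    have hds0 : p y₂ = ds.extend 0 := by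
      rw [Path.extend_zero]; exact hpy.symm
    obtain ⟨Lη, hLηc, hLη0, hLηp⟩ := my_exists_lift hp ds.extend ds.continuous_extend y₂ hds0
    set z : Vt := Lη 1 with hzdef
    set η : Path y₂ z := ⟨⟨fun s : unitInterval => Lη s, hLηc.comp continuous_subtype_val⟩, hLη0, rfl⟩
      with hη
    have hηp : ∀ s : unitInterval, p (η s) = ds s := by
      intro s
      show p (Lη s) = ds s
      rw [hLηp s]
      have hm : max 0 (min (s:ℝ) 1) = (s:ℝ) :=
        by rw [min_eq_left s.2.2, max_eq_right s.2.1]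
      rw [hm]
      exact ds.extend_apply ⟨s.2.1, s.2.2⟩
    set Λ : Path xt z := δp.trans (γp.trans η) with hΛ
    have hz : p z = p xt := by
      have h1 := hηp 1
      simp only [Path.target] at h1
      exact h1
    set α : Path (p xt) (p xt) := (Λ.map hp.continuous).cast rfl hz.symm with hα
    have hαs : ∀ s : unitInterval, α s = p (Λ s) := by
      intro s
      rw [hα, Path.cast_coe, Path.map_coe]
      rfl
    -- the corresponding loop upstairs in Mt
    set dψ : Path at_ (psib y₁) := (δp.map hpsib_cont).cast hbase.symm rfl with hdψ
    set gψ : Path (psib y₁) (psib y₁) := (γp.map hpsib_cont).cast rfl hψeq with hgψ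
    set Lψ : Path at_ at_ := dψ.trans (gψ.trans dψ.symm) with hLψ
    have hPL : ∀ s : unitInterval, (Lψ.map hP.continuous) s = (α.map hiota_cont) s := by
      intro s
      rw [Path.map_coe, Path.map_coe]
      show P (Lψ s) = iota (α s)
      rw [hαs s, hLψ, hΛ, Path.trans_apply, Path.trans_apply]
      split_ifs with h1
      · rw [hdψ, Path.cast_coe, Path.map_coe]
        exact hcomm _
      · rw [Path.trans_apply, Path.trans_apply]
        split_ifs with h2
        · rw [hgψ, Path.cast_coe, Path.map_coe]
          exact hcomm _
        · rw [Path.symm_apply]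
          show P (dψ ((unitInterval.symm _ : unitInterval))) = iota (p (η _))
          rw [hηp, hdψ, Path.cast_coe, Path.map_coe, hds, Path.symm_apply]
          show P (psib (δp _)) = iota ((δp.map hp.continuous) _)
          rw [Path.map_coe]
          exact hcomm _
    have hmem : fgMk (α.map hiota_cont) ∈
        (piMap ((⟨iota, hiota_cont⟩ : C(V, M)).comp ⟨p, hp.continuous⟩) xt).range := by
      rw [← hrange]
      refine Subgroup.mem_map.mpr ⟨piMap ⟨P, hP.continuous⟩ at_ (fgMk Lψ), ⟨fgMk Lψ, rfl⟩, ?_⟩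
      rw [piMap_fgMk]
      exact pi1Cast_fgMk hat _ _ fun t => hPL t
    obtain ⟨bb, hbb⟩ := hmem
    obtain ⟨β, hβ⟩ := Quotient.exists_rep (bb : Path.Homotopic.Quotient xt xt)
    have hbbeq : bb = fgMk β := hβ.symm
    rw [hbbeq, piMap_fgMk] at hbb
    have h5 : piMap ⟨iota, hiota_cont⟩ (p xt) (fgMk (β.map hp.continuous))
        = piMap ⟨iota, hiota_cont⟩ (p xt) (fgMk α) := by
      rw [piMap_fgMk, piMap_fgMk]
      rw [fgMk_hom, fgMk_hom]
      have hmm : (β.map hp.continuous).map hiota_cont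
          = β.map (((⟨iota, hiota_cont⟩ : C(V, M)).comp ⟨p, hp.continuous⟩).continuous) := by
        ext t
        simp [Path.map_coe]
      rw [hmm]
      exact hbb
    have h6 := hinj h5
    have h7 : (⟦β.map hp.continuous⟧ : Path.Homotopic.Quotient (p xt) (p xt)) = ⟦α⟧ :=
      h6
    have h8 : Path.Homotopic (β.map hp.continuous) α := Quotient.exact h7
    -- compare the endpoints of the lifts of α and β.map p
    have hΛext : ∀ t : ℝ, p (Λ.extend t) = α.extend t := fun t => by
      show p (Λ (projIcc 0 1 zero_le_one t)) = α (projIcc 0 1 zero_le_one t)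
      rw [hαs]
    have hβext : ∀ t : ℝ, p (β.extend t) = (β.map hp.continuous).extend t := fun t => by
      show p (β (projIcc 0 1 zero_le_one t)) = (β.map hp.continuous) (projIcc 0 1 zero_le_one t)
      rw [Path.map_coe]
      rfl
    have hstart : Λ.extend 0 = β.extend 0 := by
      rw [Path.extend_zero, Path.extend_zero]
    have hend := my_heq_end hp h8.symm Λ.continuous_extend β.continuous_extend
      hΛext hβext hstart
    have hzxt : z = xt := by
      rwa [Path.extend_one, Path.extend_one] at hend
    -- uniqueness of lifts: η.symm and δp both lift δp.map p
    have hfinal : (η.symm.extend : ℝ → Vt) = δp.extend := by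
      refine hp.eq_of_comp_eq η.symm.continuous_extend δp.continuous_extend
        (funext fun t => ?_) 0 ?_
      · show p (η.symm (projIcc 0 1 zero_le_one t)) = p (δp (projIcc 0 1 zero_le_one t))
        simp only [Path.symm_apply, Function.comp_apply]
        rw [hηp, hds]
        simp only [Path.symm_apply, Function.comp_apply]
        rw [unitInterval.symm_symm, Path.map_coe]
        rfl
      · rw [Path.extend_zero, Path.extend_zero]
        exact hzxt
    have hfin1 := congrFun hfinal 1
    rw [Path.extend_one, Path.extend_one] at hfin1
    exact hfin1.symm
  refine ⟨hinj_psib, ?_, hinj_psib⟩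
  rw [Topology.isInducing_iff_nhds]
  intro y
  refine le_antisymm ?_ ?_
  · exact (Filter.tendsto_iff_comap.mp (hpsib_cont.tendsto y))
  · intro s hs
    rw [Filter.mem_comap]
    obtain ⟨O, hOsub, hOopen, hyO⟩ := mem_nhds_iff.mp hs
    obtain ⟨e, hesrc, hePeq⟩ := hP.isLocalHomeomorph (psib y)
    set S := e.source with hSdef
    have hSopen : IsOpen S := e.open_source
    have hSinj : Set.InjOn P S := by
      intro u hu v hv huv
      rw [hePeq] at huv
      exact e.injOn hu hv huv
    set W : Set Vt := O ∩ psib ⁻¹' S with hW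
    have hWopen : IsOpen W := hOopen.inter (hSopen.preimage hpsib_cont)
    have hyW : y ∈ W := ⟨hyO, hesrc⟩
    have hpWopen : IsOpen (p '' W) := hp.isOpenMap W hWopen
    obtain ⟨T, hTopen, hTpre⟩ := hiota.toIsInducing.isOpen_iff.mp hpWopen
    refine ⟨S ∩ P ⁻¹' T, ?_, ?_⟩
    · refine (hSopen.inter (hTopen.preimage hP.continuous)).mem_nhds ⟨hesrc, ?_⟩
      show P (psib y) ∈ T
      rw [hcomm y]
      have : p y ∈ iota ⁻¹' T := by rw [hTpre]; exact Set.mem_image_of_mem p hyW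
      exact this
    · intro w hw
      obtain ⟨hwS, hwT⟩ := hw
      have hpw : p w ∈ p '' W := by
        rw [← hTpre]
        show iota (p w) ∈ T
        rw [← hcomm w]
        exact hwT
      obtain ⟨w', hw'W, hw'eq⟩ := hpw
      have hPeq : P (psib w') = P (psib w) := by
        rw [hcomm, hcomm, hw'eq]
      have hψw : psib w' = psib w := hSinj hw'W.2 hwS hPeq
      have : w' = w := hinj_psib hψw
      exact hOsub (this ▸ hw'W.1)

end LiftingAux
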